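/- arXiv:2001.08729 — 2 statements merged into one kernel-verified Lean document; each statement's English description precedes it below -/
import Mathlib

section
/- Let $Y$ be a smooth manifold with contact form $\alpha$, let $\xi = \ker\alpha$, and let $H : Y \to \mathbb{R}$ be smooth with contact Hamiltonian vector field $X_H$ (characterized by $\alpha(X_H) = H$ and $\iota_{X_H}d\alpha = dH(R_\alpha)\alpha - dH$, where $R_\alpha$ is the Reeb field). Let $C \subseteq Y$ be a submanifold. Then $(X_H)_q$ lies in the $d\alpha$-orthogonal complement of $T_qC \cap \xi_q$ inside $\xi_q$ for every $q \in C$ if and only if $H|_C = 0$. -/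
lemma tangentCone_singleton_zero {E : Type*} [NormedAddCommGroup E] [NormedSpace ℝ E]
    {v : E} (hv : v ∈ tangentConeAt ℝ ({0} : Set E) (0 : E)) : v = 0 := by
  obtain ⟨c, d, -, hd, hcd⟩ := mem_tangentConeAt_iff_exists_seq.1 hv
  have : ∀ᶠ n in Filter.atTop, c n • d n = 0 := by
    filter_upwards [hd] with n hn
    simp only [Set.mem_singleton_iff, zero_add] at hn
    simp [hn]
  have h0 : Filter.Tendsto (fun n => c n • d n) Filter.atTop (nhds (0 : E)) := by
    refine Filter.Tendsto.congr' ?_ tendsto_const_nhds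
    filter_upwards [this] with n hn using hn.symm
  exact tendsto_nhds_unique hcd h0

lemma fderiv_zero_on_tangentCone {E : Type*} [NormedAddCommGroup E] [NormedSpace ℝ E]
    {H : E → ℝ} (hH : Differentiable ℝ H) {C : Set E} {q : E} (hq : q ∈ C)
    (h0 : ∀ x ∈ C, H x = 0) {v : E} (hv : v ∈ tangentConeAt ℝ C q) :
    fderiv ℝ H q v = 0 := by
  have hfd : HasFDerivWithinAt H (fderiv ℝ H q) C q :=
    (hH q).hasFDerivAt.hasFDerivWithinAt
  have := hfd.mapsTo_tangent_cone (x := q) hv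
  have himg : H '' C ⊆ ({0} : Set ℝ) := by
    rintro _ ⟨x, hx, rfl⟩
    simp [h0 x hx]
  have hHq : H q = 0 := h0 q hq
  have := tangentConeAt_mono himg (hHq ▸ this)
  exact tangentCone_singleton_zero this

/-- (Local model on a normed space.)  Let `α` be a (pointwise) contact
form on `E` with `dα = ω` and Reeb field `R` (`α(R) = 1`, `ι_R ω = 0`), let `H` be a
smooth function with contact Hamiltonian vector field `X` characterized by
`α(X) = H` and `ι_X ω = dH(R) α - dH`, and let `C ⊆ E` be a submanifold (here: any
subset, with tangent space `T_q C = span(tangentConeAt ℝ C q)`).  Then `X_q` lies in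
the `ω`-orthogonal complement of `T_qC ∩ ξ_q` inside `ξ_q = ker α_q` for every `q ∈ C`
if and only if `H` vanishes on `C`. -/
theorem statement4 {E : Type*} [NormedAddCommGroup E] [NormedSpace ℝ E]
    (α : E → E →L[ℝ] ℝ) (ω : E → E →L[ℝ] E →L[ℝ] ℝ) (R : E → E)
    (hReeb : ∀ q, α q (R q) = 1 ∧ ω q (R q) = 0)
    (H : E → ℝ) (hH : Differentiable ℝ H)
    (X : E → E)
    (hX : ∀ q, α q (X q) = H q ∧
      ∀ v, ω q (X q) v = fderiv ℝ H q (R q) * α q v - fderiv ℝ H q v)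
    (C : Set E) :
    (∀ q ∈ C, X q ∈ LinearMap.ker (α q : E →ₗ[ℝ] ℝ) ∧
        ∀ v ∈ Submodule.span ℝ (tangentConeAt ℝ C q) ⊓ LinearMap.ker (α q : E →ₗ[ℝ] ℝ),
          ω q (X q) v = 0) ↔
      (∀ q ∈ C, H q = 0) := by
  constructor
  · intro h q hq
    have h1 := (h q hq).1
    rw [LinearMap.mem_ker] at h1
    rw [← (hX q).1]
    exact h1
  · intro h q hq
    have hHq : H q = 0 := h q hq
    constructor
    · rw [LinearMap.mem_ker, ContinuousLinearMap.coe_coe]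
      rw [(hX q).1, hHq]
    · intro v hv
      obtain ⟨hv1, hv2⟩ := Submodule.mem_inf.1 hv
      have hdv : fderiv ℝ H q v = 0 := by
        have hsub : tangentConeAt ℝ C q ⊆ (LinearMap.ker (fderiv ℝ H q : E →ₗ[ℝ] ℝ) : Set E) := by
          intro w hw
          exact fderiv_zero_on_tangentCone hH hq h hw
        have := Submodule.span_le.2 hsub hv1
        exact this
      rw [(hX q).2 v, hdv, (id (LinearMap.mem_ker.1 hv2) : α q v = 0)]
      ring
end

section
/- Let $F : (a,\infty) \to (-\infty, 0]$ be continuous with $F(u) < 0$ for $u > u_0$ and $F(u)=0$ for $u \leq u_0$, and let $G(u) = \int_{u_1}^u dv/F(v)$ for some fixed $u_1 > u_0$, assumed to define a diffeomorphism $G : (u_0,\infty) \to \mathbb{R}$ (this uses $\int_{u_1}^\infty du/F(u) = -\infty$). Let $0 < d_z \leq d_y$ and let $u : I \to \mathbb{R}$ be differentiable on an interval $I \ni 0$ with $u(0) > u_0$ and $-d_z F(u(t)) \leq u'(t) \leq -d_y F(u(t))$ for all $t \in I$. Then for all $t \in I$ with $t \geq 0$: $G^{-1}(G(u(0)) - d_z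 t) \leq u(t) \leq G^{-1}(G(u(0)) - d_y t)$. -/
/-- (Bihari-type comparison, Proposition `bihari` of the paper.)
Let `F ≤ 0` be continuous, negative exactly on `(u₀, ∞)`, let
`G(u) = ∫_{u₁}^u dv / F(v)` define a (strictly decreasing) bijection from `(u₀, ∞)`
onto `ℝ` with inverse `Ginv`, let `0 < d_z ≤ d_y`, and let `u` be differentiable on an
interval `I ∋ 0` with `u(0) > u₀` and `-d_z F(u(t)) ≤ u'(t) ≤ -d_y F(u(t))` on `I`.
Then `Ginv(G(u(0)) - d_z t) ≤ u(t) ≤ Ginv(G(u(0)) - d_y t)` for all `t ∈ I` with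
`t ≥ 0`. -/
theorem statement12 (u0 u1 dy dz : ℝ) (hdz : 0 < dz) (hdydz : dz ≤ dy)
    (F : ℝ → ℝ) (hFcont : Continuous F)
    (hFnonpos : ∀ u, F u ≤ 0)
    (hFneg : ∀ u, u0 < u → F u < 0) (hFzero : ∀ u ≤ u0, F u = 0)
    (hu1 : u0 < u1)
    (G Ginv : ℝ → ℝ)
    (hG : ∀ u ∈ Set.Ioi u0, G u = ∫ v in u1..u, 1 / F v)
    (hGinv : ∀ u ∈ Set.Ioi u0, Ginv (G u) = u)
    (hGsurj : ∀ w : ℝ, ∃ u ∈ Set.Ioi u0, G u = w)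
    (I : Set ℝ) (hI : I.OrdConnected) (h0I : (0 : ℝ) ∈ I)
    (u u' : ℝ → ℝ) (hderiv : ∀ t ∈ I, HasDerivAt u (u' t) t)
    (hu0 : u0 < u 0)
    (hsand : ∀ t ∈ I, -(dz * F (u t)) ≤ u' t ∧ u' t ≤ -(dy * F (u t))) :
    ∀ t ∈ I, 0 ≤ t →
      Ginv (G (u 0) - dz * t) ≤ u t ∧ u t ≤ Ginv (G (u 0) - dy * t) := by
  have hIconv : Convex ℝ I := convex_iff_ordConnected.mpr hI
  have ucont : ContinuousOn u I := fun t ht => (hderiv t ht).continuousAt.continuousWithinAt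
  -- u is monotone on I
  have hu'nonneg : ∀ t ∈ I, 0 ≤ u' t := by
    intro t ht
    have h1 : 0 ≤ -(dz * F (u t)) := by
      have := hFnonpos (u t)
      nlinarith
    exact h1.trans (hsand t ht).1
  have humono : MonotoneOn u I := by
    refine monotoneOn_of_deriv_nonneg hIconv ucont
      (fun x hx => ((hderiv x (interior_subset hx)).differentiableAt).differentiableWithinAt)
      (fun x hx => ?_)
    rw [(hderiv x (interior_subset hx)).deriv]
    exact hu'nonneg x (interior_subset hx)
  -- continuity of 1/F on Ioi u0
  have h1F : ContinuousOn (fun v => 1 / F v) (Set.Ioi u0) :=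
    continuousOn_const.div hFcont.continuousOn (fun v hv => (hFneg v hv).ne)
  -- G has derivative 1/F on Ioi u0
  have hGd : ∀ x ∈ Set.Ioi u0, HasDerivAt G (1 / F x) x := by
    intro x hx
    have hsub : Set.uIcc u1 x ⊆ Set.Ioi u0 :=
      Set.ordConnected_Ioi.uIcc_subset hu1 hx
    have hint : IntervalIntegrable (fun v => 1 / F v) MeasureTheory.volume u1 x :=
      (h1F.mono hsub).intervalIntegrable
    have hmeas : StronglyMeasurableAtFilter (fun v => 1 / F v) (nhds x) :=
      h1F.stronglyMeasurableAtFilter isOpen_Ioi _ hx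
    have hca : ContinuousAt (fun v => 1 / F v) x :=
      h1F.continuousAt (isOpen_Ioi.mem_nhds hx)
    have hI2 : HasDerivAt (fun y => ∫ v in u1..y, 1 / F v) (1 / F x) x :=
      intervalIntegral.integral_hasDerivAt_right hint hmeas hca
    refine hI2.congr_of_eventuallyEq ?_
    filter_upwards [isOpen_Ioi.mem_nhds hx] with y hy
    exact hG y hy
  -- G is strictly antitone on Ioi u0
  have hGanti : StrictAntiOn G (Set.Ioi u0) := by
    refine strictAntiOn_of_deriv_neg (convex_Ioi u0)
      (fun x hx => (hGd x hx).continuousAt.continuousWithinAt) (fun x hx => ?_)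
    rw [interior_Ioi] at hx
    rw [(hGd x hx).deriv]
    exact div_neg_of_pos_of_neg one_pos (hFneg x hx)
  -- Ginv is antitone
  have hGinvanti : ∀ a b : ℝ, a ≤ b → Ginv b ≤ Ginv a := by
    intro a b hab
    obtain ⟨x, hx, rfl⟩ := hGsurj a
    obtain ⟨y, hy, rfl⟩ := hGsurj b
    rw [hGinv x hx, hGinv y hy]
    by_contra h
    push_neg at h
    exact absurd (hGanti hx hy h) (not_lt.mpr hab)
  -- on J = I ∩ Ici 0, u t > u0
  set J : Set ℝ := I ∩ Set.Ici 0 with hJ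
  have hJconv : Convex ℝ J := hIconv.inter (convex_Ici 0)
  have h0J : (0 : ℝ) ∈ J := ⟨h0I, Set.self_mem_Ici⟩
  have huJ : ∀ t ∈ J, u0 < u t := fun t ht =>
    lt_of_lt_of_le hu0 (humono h0I ht.1 ht.2)
  -- derivative of G ∘ u on J
  have hGuD : ∀ t ∈ J, HasDerivAt (fun s => G (u s)) (1 / F (u t) * u' t) t := fun t ht =>
    (hGd (u t) (huJ t ht)).comp t (hderiv t ht.1)
  have hGucont : ContinuousOn (fun s => G (u s)) J := fun t ht =>
    (hGuD t ht).continuousAt.continuousWithinAt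
  have hintJ : interior J ⊆ J := interior_subset
  -- φ(t) + dz t is antitone on J
  have hA : AntitoneOn (fun s => G (u s) + dz * s) J := by
    refine antitoneOn_of_deriv_nonpos hJconv
      (hGucont.add (continuousOn_const.mul continuousOn_id))
      (fun x hx => (((hGuD x (hintJ hx)).add
        ((hasDerivAt_id x).const_mul dz)).differentiableAt).differentiableWithinAt)
      (fun x hx => ?_)
    have hx' := hintJ hx
    have hd := (hGuD x hx').add ((hasDerivAt_id x).const_mul dz)
    simp only [id_eq] at hd
    rw [show (fun s => G (u s) + dz * s) = ((fun s => G (u s)) + fun y => dz * y) from rfl, hd.deriv]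
    have hFneg' : F (u x) < 0 := hFneg _ (huJ x hx')
    have h1 := (hsand x hx'.1).1
    have : u' x / F (u x) ≤ -dz := by
      rw [div_le_iff_of_neg hFneg']
      nlinarith
    have : 1 / F (u x) * u' x ≤ -dz := by
      rw [one_div, inv_mul_eq_div]
      exact this
    simp only [mul_one]
    linarith
  -- φ(t) + dy t is monotone on J
  have hB : MonotoneOn (fun s => G (u s) + dy * s) J := by
    refine monotoneOn_of_deriv_nonneg hJconv
      (hGucont.add (continuousOn_const.mul continuousOn_id))
      (fun x hx => (((hGuD x (hintJ hx)).add
        ((hasDerivAt_id x).const_mul dy)).differentiableAt).differentiableWithinAt)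
      (fun x hx => ?_)
    have hx' := hintJ hx
    have hd := (hGuD x hx').add ((hasDerivAt_id x).const_mul dy)
    simp only [id_eq] at hd
    rw [show (fun s => G (u s) + dy * s) = ((fun s => G (u s)) + fun y => dy * y) from rfl, hd.deriv]
    have hFneg' : F (u x) < 0 := hFneg _ (huJ x hx')
    have h1 := (hsand x hx'.1).2
    have : -dy ≤ u' x / F (u x) := by
      rw [le_div_iff_of_neg hFneg']
      nlinarith
    have : -dy ≤ 1 / F (u x) * u' x := by
      rw [one_div, inv_mul_eq_div]
      exact this
    simp only [mul_one]
    linarith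
  -- conclude
  intro t ht ht0
  have htJ : t ∈ J := ⟨ht, ht0⟩
  have hupper : G (u t) ≤ G (u 0) - dz * t := by
    have := hA h0J htJ ht0
    simp only [mul_zero, add_zero] at this
    linarith
  have hlower : G (u 0) - dy * t ≤ G (u t) := by
    have := hB h0J htJ ht0
    simp only [mul_zero, add_zero] at this
    linarith
  have hut : u0 < u t := huJ t htJ
  constructor
  · have := hGinvanti (G (u t)) (G (u 0) - dz * t) hupper
    rwa [hGinv (u t) hut] at this
  · have := hGinvanti (G (u 0) - dy * t) (G (u t)) hlower
    rwa [hGinv (u t) hut] at this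
end
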